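/- ∫₀^∞ sinc(x)·sinc(x)·sinc(x/3) dx = 11π/24, where sinc(x) = sin(x)/x for x ≠ 0 and sinc(0) = 1. -/

import Mathlib

open Real hiding sinc continuous_sinc exp_bound
open Filter MeasureTheory intervalIntegral Set

noncomputable def sinc (x : ℝ) : ℝ := if x = 0 then 1 else Real.sin x / x

lemma sinc_of_ne (x : ℝ) (hx : x ≠ 0) : sinc x = Real.sin x / x := if_neg hx

lemma continuous_sinc : Continuous sinc := by
  rw [continuous_iff_continuousAt]
  intro x
  rcases ne_or_eq x 0 with hx | hx
  · have : ContinuousAt (fun x => Real.sin x / x) x :=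
      (Real.continuous_sin.continuousAt).div continuousAt_id hx
    refine this.congr ?_
    filter_upwards [isOpen_ne.mem_nhds hx] with y hy
    simp [sinc_of_ne y hy]
  · subst hx
    have h1 : Tendsto (fun y : ℝ => Real.sin y / y) (nhdsWithin (0:ℝ) {0}ᶜ) (nhds 1) := by
      have := (Real.hasDerivAt_sin 0)
      rw [hasDerivAt_iff_tendsto_slope] at this
      refine (by simpa [Real.cos_zero] using this : Tendsto (slope Real.sin 0) (nhdsWithin (0:ℝ) {0}ᶜ) (nhds 1)).congr ?_
      intro y
      simp [slope_fun_def, div_eq_inv_mul]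
    unfold ContinuousAt
    rw [show sinc 0 = 1 by simp [sinc], ← nhdsNE_sup_pure (0:ℝ)]
    rw [tendsto_sup]
    constructor
    · refine h1.congr' ?_
      filter_upwards [self_mem_nhdsWithin] with y hy
      simp [sinc_of_ne y hy]
    · simpa [sinc] using tendsto_pure_nhds sinc 0

lemma inner_integral (y T : ℝ) :
    ∫ x in (0:ℝ)..T, Real.exp (-(y*x)) * Real.sin x
      = (1 - Real.exp (-(y*T)) * (y * Real.sin T + Real.cos T)) / (1 + y^2) := by
  have key : ∀ x : ℝ, HasDerivAt
      (fun x => Real.exp (-(y*x)) * (-(y * Real.sin x) - Real.cos x) / (1 + y^2))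
      (Real.exp (-(y*x)) * Real.sin x) x := by
    intro x
    have h0 : HasDerivAt (fun x : ℝ => -(y*x)) (-y) x := by
      simpa using (hasDerivAt_id x).const_mul (-y)
    have h1 : HasDerivAt (fun x : ℝ => Real.exp (-(y*x))) (Real.exp (-(y*x)) * (-y)) x :=
      by have := (Real.hasDerivAt_exp (-(y*x))).comp x h0; exact this
    have h2 : HasDerivAt (fun x : ℝ => -(y * Real.sin x) - Real.cos x)
        (-(y * Real.cos x) - (-Real.sin x)) x :=
      (((Real.hasDerivAt_sin x).const_mul y).neg).sub (Real.hasDerivAt_cos x)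
    have h3 := (h1.mul h2).div_const (1 + y^2)
    have hy : (1 : ℝ) + y^2 ≠ 0 := by positivity
    refine h3.congr_deriv ?_
    field_simp
    ring
  have := intervalIntegral.integral_eq_sub_of_hasDerivAt (fun x _ => key x)
    (Continuous.intervalIntegrable (by continuity) 0 T)
  rw [this]
  have hy : (1 : ℝ) + y^2 ≠ 0 := by positivity
  field_simp
  simp only [mul_zero, neg_zero, Real.exp_zero, Real.sin_zero, Real.cos_zero]; ring

lemma integral_exp_neg_mul {b : ℝ} (hb : 0 < b) :
    ∫ y in Ioi (0:ℝ), Real.exp (-(b*y)) = 1/b := by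
  have key : ∀ x ∈ Ici (0:ℝ), HasDerivAt (fun y => -Real.exp (-(b*y))/b)
      (Real.exp (-(b*x))) x := by
    intro x _
    have h0 : HasDerivAt (fun y : ℝ => -(b*y)) (-b) x := by
      simpa using (hasDerivAt_id x).const_mul (-b)
    have h1 := (((Real.hasDerivAt_exp (-(b*x))).comp x h0).neg).div_const b
    refine h1.congr_deriv ?_
    field_simp
  have hint : IntegrableOn (fun y => Real.exp (-(b*y))) (Ioi (0:ℝ)) := by
    have := exp_neg_integrableOn_Ioi 0 hb
    refine this.congr_fun (fun y _ => by ring_nf) measurableSet_Ioi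
  have htend : Tendsto (fun y => -Real.exp (-(b*y))/b) atTop (nhds 0) := by
    have : Tendsto (fun y : ℝ => b*y) atTop atTop := tendsto_id.const_mul_atTop hb
    have h2 := (Real.tendsto_exp_neg_atTop_nhds_zero.comp this)
    have h3 := (h2.neg).div_const b
    simpa using h3
  have h := integral_Ioi_of_hasDerivAt_of_tendsto' key hint htend
  rw [h]; ring_nf; simp

lemma dirichlet_repr {T : ℝ} (hT : 0 < T) :
    ∫ x in (0:ℝ)..T, sinc x
      = ∫ y in Ioi (0:ℝ),
          (1 - Real.exp (-(y*T)) * (y * Real.sin T + Real.cos T)) / (1 + y^2) := by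
  have hmeas : AEStronglyMeasurable (Function.uncurry fun x y => Real.exp (-(y*x)) * Real.sin x)
      ((volume.restrict (Ioc (0:ℝ) T)).prod (volume.restrict (Ioi (0:ℝ)))) := by
    apply Continuous.aestronglyMeasurable
    apply Continuous.mul
    · exact Real.continuous_exp.comp (by continuity)
    · exact Real.continuous_sin.comp continuous_fst
  have hInt : Integrable (Function.uncurry fun x y => Real.exp (-(y*x)) * Real.sin x)
      ((volume.restrict (Ioc (0:ℝ) T)).prod (volume.restrict (Ioi (0:ℝ)))) := by
    rw [MeasureTheory.integrable_prod_iff hmeas]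
    constructor
    · rw [ae_restrict_iff' measurableSet_Ioc]
      filter_upwards with x hx
      have hx0 : 0 < x := hx.1
      have : IntegrableOn (fun y => Real.exp (-(x*y))) (Ioi (0:ℝ)) := by
        refine (exp_neg_integrableOn_Ioi 0 hx0).congr_fun (fun y _ => by ring_nf) measurableSet_Ioi
      have h2 : IntegrableOn (fun y => Real.exp (-(x*y)) * Real.sin x) (Ioi (0:ℝ)) :=
        this.mul_const (Real.sin x)
      exact h2.congr_fun (fun y _ => by simp only [Function.uncurry_apply_pair]; rw [mul_comm y x]) measurableSet_Ioi
    · refine Integrable.mono' (g := fun _ => (1:ℝ))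
        (integrableOn_const (C := (1:ℝ)) measure_Ioc_lt_top.ne) ?_ ?_
      · exact hmeas.norm.integral_prod_right'
      · rw [ae_restrict_iff' measurableSet_Ioc]
        filter_upwards with x hx
        have hx0 : 0 < x := hx.1
        have hcalc : ∫ y in Ioi (0:ℝ), ‖Real.exp (-(y*x)) * Real.sin x‖
            = |Real.sin x| * (1/x) := by
          rw [← integral_exp_neg_mul hx0, ← MeasureTheory.integral_const_mul]
          congr 1
          ext y
          rw [norm_mul, Real.norm_eq_abs, Real.norm_eq_abs, Real.abs_exp, mul_comm x y]
          ring
        simp only [Function.uncurry_apply_pair]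
        rw [Real.norm_eq_abs, hcalc, abs_of_nonneg (by positivity)]
        have h1 : |Real.sin x| ≤ |x| := Real.abs_sin_le_abs
        rw [abs_of_pos hx0] at h1
        calc |Real.sin x| * (1/x) ≤ x * (1/x) := by
              apply mul_le_mul_of_nonneg_right h1 (by positivity)
          _ = 1 := by field_simp
  have swap := MeasureTheory.integral_integral_swap
    (f := fun x y => Real.exp (-(y*x)) * Real.sin x) hInt
  have lhs_eq : ∫ x in (0:ℝ)..T, sinc x
      = ∫ x in Ioc (0:ℝ) T, ∫ y in Ioi (0:ℝ), Real.exp (-(y*x)) * Real.sin x := by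
    rw [intervalIntegral.integral_of_le hT.le]
    refine setIntegral_congr_fun measurableSet_Ioc (fun x hx => ?_)
    have hx0 : 0 < x := hx.1
    have : ∫ y in Ioi (0:ℝ), Real.exp (-(y*x)) * Real.sin x
        = (∫ y in Ioi (0:ℝ), Real.exp (-(x*y))) * Real.sin x := by
      rw [← MeasureTheory.integral_mul_const]
      congr 1; ext y; rw [mul_comm x y]
    rw [this, integral_exp_neg_mul hx0, sinc_of_ne x hx0.ne']
    field_simp
  rw [lhs_eq, swap]
  refine setIntegral_congr_fun measurableSet_Ioi (fun y _ => ?_)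
  rw [← intervalIntegral.integral_of_le hT.le]
  exact inner_integral y T

lemma exp_bound (T y : ℝ) (hy : 0 < y) :
    ‖Real.exp (-(T*y)) * (y * Real.sin T + Real.cos T) / (1 + y^2)‖
      ≤ 2 * Real.exp (-(T*y)) := by
  have hb : |y * Real.sin T + Real.cos T| ≤ y + 1 := by
    calc |y * Real.sin T + Real.cos T| ≤ |y * Real.sin T| + |Real.cos T| := abs_add_le _ _
      _ ≤ y * 1 + 1 := by
          rw [abs_mul, abs_of_pos hy]
          exact add_le_add (mul_le_mul_of_nonneg_left (Real.abs_sin_le_one T) hy.le)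
            (Real.abs_cos_le_one T)
      _ = y + 1 := by ring
  have hfrac : (y + 1) / (1 + y^2) ≤ 2 := by
    rw [div_le_iff₀ (by positivity)]
    nlinarith [sq_nonneg (y - 1), sq_nonneg y]
  rw [Real.norm_eq_abs, abs_div, abs_of_pos (show (0:ℝ) < 1 + y^2 by positivity),
    abs_mul, Real.abs_exp]
  calc Real.exp (-(T*y)) * |y * Real.sin T + Real.cos T| / (1 + y^2)
      ≤ Real.exp (-(T*y)) * (y + 1) / (1 + y^2) := by
        gcongr
    _ = Real.exp (-(T*y)) * ((y + 1) / (1 + y^2)) := by ring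
    _ ≤ Real.exp (-(T*y)) * 2 := mul_le_mul_of_nonneg_left hfrac (Real.exp_pos _).le
    _ = 2 * Real.exp (-(T*y)) := by ring

lemma remainder_integrable {T : ℝ} (hT : 0 < T) :
    IntegrableOn
      (fun y => Real.exp (-(T*y)) * (y * Real.sin T + Real.cos T) / (1 + y^2))
      (Ioi (0:ℝ)) := by
  refine Integrable.mono' (g := fun y => 2 * Real.exp (-(T*y)))
    (((exp_neg_integrableOn_Ioi 0 hT).congr_fun (fun y _ => by ring_nf)
      measurableSet_Ioi).const_mul 2) ?_ ?_
  · apply Continuous.aestronglyMeasurable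
    apply Continuous.div
    · exact (Real.continuous_exp.comp (by continuity)).mul (by continuity)
    · continuity
    · intro y; positivity
  · rw [ae_restrict_iff' measurableSet_Ioi]
    filter_upwards with y hy
    exact exp_bound T y hy

lemma tendsto_integral_sinc :
    Tendsto (fun T : ℝ => ∫ x in (0:ℝ)..T, sinc x) atTop (nhds (π/2)) := by
  have key : ∀ T : ℝ, 0 < T →
      ∫ x in (0:ℝ)..T, sinc x = π/2 -
        ∫ y in Ioi (0:ℝ), Real.exp (-(T*y)) * (y * Real.sin T + Real.cos T) / (1 + y^2) := by
    intro T hT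
    rw [dirichlet_repr hT]
    have h1 : IntegrableOn (fun y : ℝ => (1 + y^2)⁻¹) (Ioi (0:ℝ)) :=
      integrable_inv_one_add_sq.integrableOn
    have h2 := remainder_integrable hT
    have split : ∫ y in Ioi (0:ℝ),
        (1 - Real.exp (-(y*T)) * (y * Real.sin T + Real.cos T)) / (1 + y^2)
        = (∫ y in Ioi (0:ℝ), (1 + y^2)⁻¹)
          - ∫ y in Ioi (0:ℝ), Real.exp (-(T*y)) * (y * Real.sin T + Real.cos T) / (1 + y^2) := by
      rw [← integral_sub h1 h2]
      refine setIntegral_congr_fun measurableSet_Ioi (fun y _ => ?_)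
      rw [mul_comm y T]
      field_simp
    rw [split, integral_Ioi_inv_one_add_sq, Real.arctan_zero, sub_zero]
  have hR : Tendsto (fun T : ℝ =>
      ∫ y in Ioi (0:ℝ), Real.exp (-(T*y)) * (y * Real.sin T + Real.cos T) / (1 + y^2))
      atTop (nhds 0) := by
    apply squeeze_zero_norm' (a := fun T : ℝ => 2 * (1/T))
    · filter_upwards [eventually_gt_atTop (0:ℝ)] with T hT
      have hgint : IntegrableOn (fun y => 2 * Real.exp (-(T*y))) (Ioi (0:ℝ)) :=
        ((exp_neg_integrableOn_Ioi 0 hT).congr_fun (fun y _ => by ring_nf)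
          measurableSet_Ioi).const_mul 2
      have hle : ‖∫ y in Ioi (0:ℝ),
          Real.exp (-(T*y)) * (y * Real.sin T + Real.cos T) / (1 + y^2)‖
          ≤ ∫ y in Ioi (0:ℝ), 2 * Real.exp (-(T*y)) := by
        refine norm_integral_le_of_norm_le hgint ?_
        rw [ae_restrict_iff' measurableSet_Ioi]
        filter_upwards with y hy
        exact exp_bound T y hy
      calc ‖∫ y in Ioi (0:ℝ),
            Real.exp (-(T*y)) * (y * Real.sin T + Real.cos T) / (1 + y^2)‖
          ≤ ∫ y in Ioi (0:ℝ), 2 * Real.exp (-(T*y)) := hle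
        _ = 2 * (1/T) := by rw [MeasureTheory.integral_const_mul, integral_exp_neg_mul hT]
    · have : Tendsto (fun T : ℝ => 1/T) atTop (nhds 0) := by
        simpa [one_div] using tendsto_inv_atTop_zero
      simpa using this.const_mul 2
  have : Tendsto (fun T : ℝ => π/2 -
      ∫ y in Ioi (0:ℝ), Real.exp (-(T*y)) * (y * Real.sin T + Real.cos T) / (1 + y^2))
      atTop (nhds (π/2)) := by
    simpa using (tendsto_const_nhds (x := π/2)).sub hR
  refine this.congr' ?_
  filter_upwards [eventually_gt_atTop (0:ℝ)] with T hT
  exact (key T hT).symm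

lemma tendsto_integral_sinc_scaled {a : ℝ} (ha : 0 < a) :
    Tendsto (fun T : ℝ => ∫ x in (0:ℝ)..T, sinc (a*x)) atTop (nhds (π/(2*a))) := by
  have heq : ∀ T : ℝ, ∫ x in (0:ℝ)..T, sinc (a*x) = a⁻¹ * ∫ x in (0:ℝ)..(a*T), sinc x := by
    intro T
    rw [intervalIntegral.integral_comp_mul_left sinc ha.ne']
    simp [smul_eq_mul]
  have hcomp : Tendsto (fun T : ℝ => ∫ x in (0:ℝ)..(a*T), sinc x) atTop (nhds (π/2)) :=
    tendsto_integral_sinc.comp (tendsto_id.const_mul_atTop ha)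
  have h2 := hcomp.const_mul a⁻¹
  have h3 : a⁻¹ * (π/2) = π/(2*a) := by rw [inv_mul_eq_div, div_div]
  rw [h3] at h2
  exact h2.congr (fun T => (heq T).symm)

noncomputable def ff (x : ℝ) : ℝ :=
  (3/2) * Real.sin ((1/3)*x) - (3/4) * Real.sin ((7/3)*x) + (3/4) * Real.sin ((5/3)*x)

noncomputable def fd (x : ℝ) : ℝ :=
  (1/2) * Real.cos ((1/3)*x) - (7/4) * Real.cos ((7/3)*x) + (5/4) * Real.cos ((5/3)*x)

noncomputable def fdd (x : ℝ) : ℝ :=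
  -(1/6) * Real.sin ((1/3)*x) + (49/12) * Real.sin ((7/3)*x) - (25/12) * Real.sin ((5/3)*x)

noncomputable def hh (x : ℝ) : ℝ :=
  -(1/36) * sinc ((1/3)*x) + (343/72) * sinc ((7/3)*x) - (125/72) * sinc ((5/3)*x)

noncomputable def G (x : ℝ) : ℝ := sinc x * sinc x * sinc (x / 3)

noncomputable def BB (x : ℝ) : ℝ := -(ff x)/(2*x^2) - fd x/(2*x)

lemma hasDerivAt_sin_mul (c x : ℝ) :
    HasDerivAt (fun x : ℝ => Real.sin (c*x)) (Real.cos (c*x) * c) x :=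
  (Real.hasDerivAt_sin (c*x)).comp x (by simpa using (hasDerivAt_id x).const_mul c)

lemma hasDerivAt_cos_mul (c x : ℝ) :
    HasDerivAt (fun x : ℝ => Real.cos (c*x)) (-Real.sin (c*x) * c) x :=
  (Real.hasDerivAt_cos (c*x)).comp x (by simpa using (hasDerivAt_id x).const_mul c)

lemma hasDerivAt_ff (x : ℝ) : HasDerivAt ff (fd x) x := by
  have h := (((hasDerivAt_sin_mul (1/3) x).const_mul (3/2:ℝ)).sub
    ((hasDerivAt_sin_mul (7/3) x).const_mul (3/4:ℝ))).add
    ((hasDerivAt_sin_mul (5/3) x).const_mul (3/4:ℝ))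
  refine h.congr_deriv ?_
  unfold fd; ring

lemma hasDerivAt_fd (x : ℝ) : HasDerivAt fd (fdd x) x := by
  have h := (((hasDerivAt_cos_mul (1/3) x).const_mul (1/2:ℝ)).sub
    ((hasDerivAt_cos_mul (7/3) x).const_mul (7/4:ℝ))).add
    ((hasDerivAt_cos_mul (5/3) x).const_mul (5/4:ℝ))
  refine h.congr_deriv ?_
  unfold fdd; ring

lemma ff_eq (x : ℝ) : ff x = 3 * Real.sin x^2 * Real.sin (x/3) := by
  have h7 : (7/3:ℝ)*x = 2*x + (1/3)*x := by ring
  have h5 : (5/3:ℝ)*x = 2*x - (1/3)*x := by ring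
  have h3 : x/3 = (1/3)*x := by ring
  rw [ff, h7, h5, h3, Real.sin_add, Real.sin_sub, Real.cos_two_mul]
  have hpy := Real.sin_sq_add_cos_sq x
  linear_combination (-3 * Real.sin ((1/3)*x)) * hpy

lemma G_eq {x : ℝ} (hx : x ≠ 0) : G x = ff x / x^3 := by
  have hx3 : x/3 ≠ 0 := by simpa using hx
  rw [G, sinc_of_ne x hx, sinc_of_ne _ hx3, ff_eq]
  field_simp

lemma hh_eq {x : ℝ} (hx : x ≠ 0) : hh x = fdd x / (2*x) := by
  have h1 : (1/3:ℝ)*x ≠ 0 := by simp [hx]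
  have h2 : (7/3:ℝ)*x ≠ 0 := by simp [hx]
  have h3 : (5/3:ℝ)*x ≠ 0 := by simp [hx]
  rw [hh, fdd, sinc_of_ne _ h1, sinc_of_ne _ h2, sinc_of_ne _ h3]
  field_simp
  ring

lemma hasDerivAt_BB {x : ℝ} (hx : x ≠ 0) : HasDerivAt BB (G x - hh x) x := by
  have hden1 : HasDerivAt (fun x : ℝ => 2*x^2) (4*x) x := by
    have := (hasDerivAt_pow 2 x).const_mul (2:ℝ)
    norm_num at this
    refine this.congr_deriv ?_
    ring
  have hden2 : HasDerivAt (fun x : ℝ => 2*x) 2 x := by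
    simpa using (hasDerivAt_id x).const_mul (2:ℝ)
  have hne1 : 2*x^2 ≠ 0 := by positivity
  have hne2 : 2*x ≠ 0 := by simp [hx]
  have h1 := ((hasDerivAt_ff x).neg).div hden1 hne1
  have h2 := (hasDerivAt_fd x).div hden2 hne2
  have h := h1.sub h2
  refine h.congr_deriv ?_
  rw [G_eq hx, hh_eq hx]
  simp only [Pi.neg_apply]
  field_simp
  ring

lemma continuous_G : Continuous G :=
  (continuous_sinc.mul continuous_sinc).mul (continuous_sinc.comp (continuous_id.div_const 3))

lemma continuous_hh : Continuous hh := by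
  unfold hh
  exact ((continuous_const.mul (continuous_sinc.comp (continuous_const.mul continuous_id))).add
    (continuous_const.mul (continuous_sinc.comp (continuous_const.mul continuous_id)))).sub
    (continuous_const.mul (continuous_sinc.comp (continuous_const.mul continuous_id)))

lemma sin_sub_bound {t : ℝ} (ht : 0 < t) (ht1 : t ≤ 1) : |Real.sin t - t| ≤ t^3/4 := by
  have h1 := Real.sin_lt ht
  have h2 := Real.sin_gt_sub_cube ht
  rw [abs_le]
  constructor <;> nlinarith

lemma ff_cube_bound {x : ℝ} (hx : 0 < x) (hx7 : x ≤ 3/7) : |ff x| ≤ 4*x^3 := by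
  have b1 := sin_sub_bound (t := (1/3)*x) (by linarith) (by linarith)
  have b2 := sin_sub_bound (t := (7/3)*x) (by linarith) (by linarith)
  have b3 := sin_sub_bound (t := (5/3)*x) (by linarith) (by linarith)
  rw [abs_le] at b1 b2 b3 ⊢
  unfold ff
  constructor <;> nlinarith [pow_pos hx 3]

lemma BB_tendsto_zero : Tendsto BB (nhdsWithin 0 (Ioi 0)) (nhds 0) := by
  have hmono : nhdsWithin (0:ℝ) (Ioi 0) ≤ nhdsWithin (0:ℝ) {0}ᶜ :=
    nhdsWithin_mono 0 (fun x hx => ne_of_gt hx)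
  have part2 : Tendsto (fun x => fd x/(2*x)) (nhdsWithin 0 (Ioi 0)) (nhds 0) := by
    have hd := hasDerivAt_fd 0
    rw [hasDerivAt_iff_tendsto_slope] at hd
    have hfd0 : fd 0 = 0 := by unfold fd; norm_num
    have hfdd0 : fdd 0 = 0 := by unfold fdd; norm_num
    rw [hfdd0] at hd
    have h2 : Tendsto (fun x => fd x / x) (nhdsWithin 0 (Ioi 0)) (nhds 0) := by
      refine ((hd.mono_left hmono).congr' ?_)
      filter_upwards [self_mem_nhdsWithin] with x hx
      rw [slope_def_field, hfd0]
      simp only [sub_zero]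
    have := h2.const_mul (1/2 : ℝ)
    simp only [mul_zero] at this
    refine this.congr (fun x => ?_)
    ring
  have part1 : Tendsto (fun x => -(ff x)/(2*x^2)) (nhdsWithin 0 (Ioi 0)) (nhds 0) := by
    apply squeeze_zero_norm' (a := fun x => 2*x)
    · filter_upwards [Ioc_mem_nhdsGT_of_mem (by norm_num : (0:ℝ) ∈ Ico 0 (3/7))]
        with x hx
      have hx0 : 0 < x := hx.1
      have hb := ff_cube_bound hx0 hx.2
      rw [Real.norm_eq_abs, abs_div, abs_neg, abs_of_pos (by positivity : (0:ℝ) < 2*x^2)]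
      rw [div_le_iff₀ (by positivity : (0:ℝ) < 2*x^2)]
      nlinarith [abs_nonneg (ff x)]
    · have : Tendsto (fun x : ℝ => 2*x) (nhds 0) (nhds 0) := by
        simpa using (continuous_mul_left (2:ℝ)).tendsto (0:ℝ)
      exact this.mono_left nhdsWithin_le_nhds
  have h := part1.sub part2
  rw [sub_zero] at h
  refine h.congr (fun x => ?_)
  unfold BB
  ring

lemma BB_tendsto_atTop : Tendsto BB atTop (nhds 0) := by
  apply squeeze_zero_norm' (a := fun T : ℝ => 4/T)
  · filter_upwards [eventually_ge_atTop (1:ℝ)] with T hT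
    have hT0 : 0 < T := lt_of_lt_of_le one_pos hT
    have hff : |ff T| ≤ 3 := by
      unfold ff
      have := Real.neg_one_le_sin ((1/3)*T); have := Real.sin_le_one ((1/3)*T)
      have := Real.neg_one_le_sin ((7/3)*T); have := Real.sin_le_one ((7/3)*T)
      have := Real.neg_one_le_sin ((5/3)*T); have := Real.sin_le_one ((5/3)*T)
      rw [abs_le]; constructor <;> linarith
    have hfd : |fd T| ≤ 7/2 := by
      unfold fd
      have := Real.neg_one_le_cos ((1/3)*T); have := Real.cos_le_one ((1/3)*T)
      have := Real.neg_one_le_cos ((7/3)*T); have := Real.cos_le_one ((7/3)*T)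
      have := Real.neg_one_le_cos ((5/3)*T); have := Real.cos_le_one ((5/3)*T)
      rw [abs_le]; constructor <;> linarith
    have hBB : BB T = -((ff T + T * fd T)/(2*T^2)) := by
      unfold BB
      field_simp
      ring
    rw [Real.norm_eq_abs, hBB, abs_neg, abs_div,
      abs_of_pos (by positivity : (0:ℝ) < 2*T^2)]
    rw [div_le_div_iff₀ (by positivity) hT0]
    have htri : |ff T + T * fd T| ≤ |ff T| + T * |fd T| := by
      calc |ff T + T * fd T| ≤ |ff T| + |T * fd T| := abs_add_le _ _
        _ = |ff T| + T * |fd T| := by rw [abs_mul, abs_of_pos hT0]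
    nlinarith
  · have : Tendsto (fun T : ℝ => 1/T) atTop (nhds 0) := by
      simpa [one_div] using tendsto_inv_atTop_zero
    simpa [div_eq_mul_inv] using this.const_mul 4

lemma integral_G_eq {T : ℝ} (hT : 0 < T) :
    ∫ x in (0:ℝ)..T, G x = BB T + ∫ x in (0:ℝ)..T, hh x := by
  have hGH : Continuous (fun x => G x - hh x) := continuous_G.sub continuous_hh
  have key : ∀ ε : ℝ, 0 < ε → ε ≤ T →
      ∫ x in ε..T, (G x - hh x) = BB T - BB ε := by
    intro ε hε hεT
    apply intervalIntegral.integral_eq_sub_of_hasDerivAt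
    · intro x hx
      rw [Set.uIcc_of_le hεT] at hx
      exact hasDerivAt_BB (lt_of_lt_of_le hε hx.1).ne'
    · exact hGH.intervalIntegrable ε T
  have lim1 : Tendsto (fun ε => ∫ x in ε..T, (G x - hh x)) (nhdsWithin 0 (Ioi 0))
      (nhds (∫ x in (0:ℝ)..T, (G x - hh x))) := by
    have hprim : Continuous (fun ε => ∫ x in (0:ℝ)..ε, (G x - hh x)) :=
      intervalIntegral.continuous_primitive (fun a b => hGH.intervalIntegrable a b) 0
    have h0 : Tendsto (fun ε => ∫ x in (0:ℝ)..ε, (G x - hh x)) (nhdsWithin 0 (Ioi 0))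
        (nhds 0) := by
      have := hprim.tendsto 0
      simp only [intervalIntegral.integral_same] at this
      exact this.mono_left nhdsWithin_le_nhds
    have := (tendsto_const_nhds (x := ∫ x in (0:ℝ)..T, (G x - hh x))).sub h0
    rw [sub_zero] at this
    refine this.congr (fun ε => ?_)
    exact intervalIntegral.integral_interval_sub_left (hGH.intervalIntegrable 0 T)
      (hGH.intervalIntegrable 0 ε)
  have lim2 : Tendsto (fun ε => BB T - BB ε) (nhdsWithin 0 (Ioi 0)) (nhds (BB T)) := by
    have := (tendsto_const_nhds (x := BB T)).sub BB_tendsto_zero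
    rwa [sub_zero] at this
  have heq : ∫ x in (0:ℝ)..T, (G x - hh x) = BB T := by
    refine tendsto_nhds_unique (lim1.congr' ?_) lim2
    filter_upwards [Ioc_mem_nhdsGT_of_mem (by exact ⟨le_refl 0, hT⟩ : (0:ℝ) ∈ Ico 0 T)]
      with ε hε
    exact key ε hε.1 hε.2
  have hsub : ∫ x in (0:ℝ)..T, (G x - hh x)
      = (∫ x in (0:ℝ)..T, G x) - ∫ x in (0:ℝ)..T, hh x :=
    intervalIntegral.integral_sub (continuous_G.intervalIntegrable 0 T)
      (continuous_hh.intervalIntegrable 0 T)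
  rw [hsub] at heq
  linarith [heq]

theorem sinc_integral_example :
    Tendsto (fun T : ℝ => ∫ x in (0:ℝ)..T, _root_.sinc x * _root_.sinc x * _root_.sinc (x / 3))
      atTop (nhds (11 * π / 24)) := by
  have hint : ∀ (c : ℝ) (a b : ℝ), IntervalIntegrable (fun x => sinc (c*x)) volume a b :=
    fun c a b => (continuous_sinc.comp (continuous_const.mul continuous_id)).intervalIntegrable a b
  have hhh : ∀ T : ℝ, ∫ x in (0:ℝ)..T, hh x
      = -(1/36) * (∫ x in (0:ℝ)..T, sinc ((1/3)*x))
        + ((343/72) * (∫ x in (0:ℝ)..T, sinc ((7/3)*x))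
        + -(125/72) * (∫ x in (0:ℝ)..T, sinc ((5/3)*x))) := by
    intro T
    rw [← intervalIntegral.integral_const_mul, ← intervalIntegral.integral_const_mul,
      ← intervalIntegral.integral_const_mul, ← intervalIntegral.integral_add
        (((hint (7/3) 0 T)).const_mul _) (((hint (5/3) 0 T)).const_mul _),
      ← intervalIntegral.integral_add (((hint (1/3) 0 T)).const_mul _)
        ((((hint (7/3) 0 T)).const_mul _).add (((hint (5/3) 0 T)).const_mul _))]
    refine intervalIntegral.integral_congr (fun x _ => ?_)
    unfold hh
    ring
  have hlim : Tendsto (fun T : ℝ => ∫ x in (0:ℝ)..T, hh x) atTop (nhds (11 * π / 24)) := by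
    have l1 := (tendsto_integral_sinc_scaled (by norm_num : (0:ℝ) < 1/3)).const_mul (-(1/36) : ℝ)
    have l2 := (tendsto_integral_sinc_scaled (by norm_num : (0:ℝ) < 7/3)).const_mul ((343/72) : ℝ)
    have l3 := (tendsto_integral_sinc_scaled (by norm_num : (0:ℝ) < 5/3)).const_mul (-(125/72) : ℝ)
    have hsum := l1.add (l2.add l3)
    have hval : -(1/36) * (π/(2*(1/3))) + ((343/72) * (π/(2*(7/3))) + -(125/72) * (π/(2*(5/3))))
        = 11 * π / 24 := by ring
    rw [hval] at hsum
    exact hsum.congr (fun T => (hhh T).symm)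
  have hfinal : Tendsto (fun T : ℝ => BB T + ∫ x in (0:ℝ)..T, hh x) atTop
      (nhds (11 * π / 24)) := by
    have := BB_tendsto_atTop.add hlim
    rwa [zero_add] at this
  refine hfinal.congr' ?_
  filter_upwards [eventually_gt_atTop (0:ℝ)] with T hT
  exact (integral_G_eq hT).symm
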